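/- Suppose m ≥ 1, no inner knot has multiplicity greater than m, and fix j with 0 ≤ j ≤ n−1 such that t_j < t_{j+1}. Then for every i with j − m ≤ i ≤ j − 1, the leading adjusted Bernstein–Bézier coefficients of the B-spline functions over the knot span [t_j, t_{j+1}) satisfy the recurrence b_{m,m}^{(i,j)} = ((t_{j+1} − t_i)/(t_{m+i} − t_i))·b_{m−1,m−1}^{(i,j)} + ((t_{m+i+1} − t_{j+1})/(t_{m+i+1} − t_{i+1}))·b_{m−1,m−1}^{(i+1,j)}, where a fraction whose denominator vanishes is replaced by 0 and where b_{p,p}^{(i,j)} := 0 whenever i < j − p. -/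

import Mathlib

/-- The B-spline basis functions `N_{p,i}` of degree `p` over the knot
sequence `t`, defined by the de Boor–Cox recursion, with the conventions that
a fraction with vanishing denominator is replaced by `0` (automatic for real
division in Lean) and that `N_{p,q} ≡ 0` whenever `q < -p` or `q ≥ n`. -/
noncomputable def bspline (t : ℤ → ℝ) (n : ℕ) : ℕ → ℤ → ℝ → ℝ
  | 0 => fun i u =>
      if 0 ≤ i ∧ i < (n : ℤ) ∧ t i ≤ u ∧ u < t (i + 1) then 1 else 0
  | p + 1 => fun i u =>
      if -((p : ℤ) + 1) ≤ i ∧ i < (n : ℤ) then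
        (u - t i) / (t ((p : ℤ) + 1 + i) - t i) * bspline t n p i u
          + (t ((p : ℤ) + 1 + i + 1) - u) / (t ((p : ℤ) + 1 + i + 1) - t (i + 1))
              * bspline t n p (i + 1) u
      else 0

/-- The `k`-th Bernstein basis polynomial of degree `p`. -/
noncomputable def bern (p k : ℕ) (x : ℝ) : ℝ :=
  (p.choose k : ℝ) * x ^ k * (1 - x) ^ (p - k)

/-- the recurrence for the leading adjusted Bernstein–Bézier
coefficients over a non-empty knot span `[t_j, t_{j+1})`:
`b_{m,m}^{(i,j)} = ((t_{j+1} − t_i)/(t_{m+i} − t_i))·b_{m−1,m−1}^{(i,j)}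
    + ((t_{m+i+1} − t_{j+1})/(t_{m+i+1} − t_{i+1}))·b_{m−1,m−1}^{(i+1,j)}`
for `j − m ≤ i ≤ j − 1`, where a fraction whose denominator vanishes is `0`
(automatic for real division) and `b_{p,p}^{(i,j)} := 0` whenever `i < j − p`.
Here `b p i k` denotes `b_{p,k}^{(i,j)}`, characterized by the
Bernstein–Bézier representation of `N_{p,i}` on `[t_j, t_{j+1})`. -/
theorem bspline_bezier_leading_coeff_recurrence
    (m n : ℕ) (hm : 1 ≤ m) (hn : 1 ≤ n) (t : ℤ → ℝ)
    (hmono : ∀ k l : ℤ, -(m : ℤ) ≤ k → k ≤ l → l ≤ (n : ℤ) + m → t k ≤ t l)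
    (h0n : t 0 < t n)
    (hmult : ∀ r : ℤ, 1 ≤ r → r ≤ (n : ℤ) - 1 →
      ((Finset.Icc (-(m : ℤ)) ((n : ℤ) + m)).filter (fun k => t k = t r)).card ≤ m)
    (j : ℤ) (hj1 : 0 ≤ j) (hj2 : j ≤ (n : ℤ) - 1) (hspan : t j < t (j + 1))
    (b : ℕ → ℤ → ℕ → ℝ)
    (hb : ∀ p : ℕ, ∀ i : ℤ, ∀ u ∈ Set.Ico (t j) (t (j + 1)),
      bspline t n p i u
        = ∑ k ∈ Finset.range (p + 1),
            b p i k * bern p k ((u - t j) / (t (j + 1) - t j)))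
    (i : ℤ) (hi1 : j - m ≤ i) (hi2 : i ≤ j - 1) :
    b m i m
      = (t (j + 1) - t i) / (t ((m : ℤ) + i) - t i)
          * (if i < j - ((m : ℤ) - 1) then 0 else b (m - 1) i (m - 1))
        + (t ((m : ℤ) + i + 1) - t (j + 1)) / (t ((m : ℤ) + i + 1) - t (i + 1))
            * (if i + 1 < j - ((m : ℤ) - 1) then 0 else b (m - 1) (i + 1) (m - 1)) := by
  have hΔ : t (j + 1) - t j ≠ 0 := sub_ne_zero.2 (ne_of_gt hspan)
  have hmem : Set.Ico (t j) (t (j + 1)) ∈ nhdsWithin (t (j + 1)) (Set.Iio (t (j + 1))) :=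
    Ico_mem_nhdsLT hspan
  -- the polynomial sum tends to the leading coefficient at the right endpoint
  have key : ∀ p : ℕ, ∀ i : ℤ,
      Filter.Tendsto (bspline t n p i) (nhdsWithin (t (j + 1)) (Set.Iio (t (j + 1))))
        (nhds (b p i p)) := by
    intro p i
    have h1 : Continuous (fun u : ℝ => (u - t j) / (t (j + 1) - t j)) :=
      (continuous_id.sub continuous_const).div_const _
    have hcont : Continuous (fun u : ℝ => ∑ k ∈ Finset.range (p + 1),
        b p i k * bern p k ((u - t j) / (t (j + 1) - t j))) := by
      apply continuous_finset_sum
      intro k _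
      unfold bern
      exact continuous_const.mul ((continuous_const.mul (h1.pow k)).mul
        ((continuous_const.sub h1).pow (p - k)))
    have hval : (∑ k ∈ Finset.range (p + 1),
        b p i k * bern p k ((t (j + 1) - t j) / (t (j + 1) - t j))) = b p i p := by
      rw [div_self hΔ, Finset.sum_range_succ]
      have h2 : ∀ k ∈ Finset.range p, b p i k * bern p k 1 = 0 := by
        intro k hk
        have : p - k ≠ 0 := Nat.sub_ne_zero_of_lt (Finset.mem_range.1 hk)
        simp [bern, zero_pow this]
      rw [Finset.sum_eq_zero h2]
      simp [bern]
    have h3 : Filter.Tendsto (fun u : ℝ => ∑ k ∈ Finset.range (p + 1),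
        b p i k * bern p k ((u - t j) / (t (j + 1) - t j)))
        (nhdsWithin (t (j + 1)) (Set.Iio (t (j + 1)))) (nhds (b p i p)) := by
      have := (hcont.tendsto (t (j + 1))).mono_left
        (nhdsWithin_le_nhds (s := Set.Iio (t (j + 1))))
      rwa [hval] at this
    apply Filter.Tendsto.congr' _ h3
    filter_upwards [hmem] with u hu
    exact (hb p i u hu).symm
  -- splines supported to the left of t j vanish on the span
  have hzero : ∀ p : ℕ, ∀ i : ℤ, i + (p : ℤ) + 1 ≤ j →
      ∀ u ∈ Set.Ico (t j) (t (j + 1)), bspline t n p i u = 0 := by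
    intro p
    induction p with
    | zero =>
      intro i hij u hu
      simp only [bspline]
      rw [if_neg]
      rintro ⟨h0, hn', hl, hr⟩
      have h1 : t (i + 1) ≤ t j := hmono (i + 1) j (by omega) (by omega) (by omega)
      have := hu.1
      linarith
    | succ p ih =>
      intro i hij u hu
      have hij' : i + (p : ℤ) + 1 ≤ j := by push_cast at hij; omega
      have hij'' : (i + 1) + (p : ℤ) + 1 ≤ j := by push_cast at hij; omega
      simp only [bspline]
      split
      · rw [ih i hij' u hu, ih (i + 1) hij'' u hu]; ring
      · rfl
  -- leading coefficients of left-supported splines vanish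
  have hbz : ∀ p : ℕ, ∀ i : ℤ, i + (p : ℤ) + 1 ≤ j → b p i p = 0 := by
    intro p i h
    have h2 : Filter.Tendsto (bspline t n p i)
        (nhdsWithin (t (j + 1)) (Set.Iio (t (j + 1)))) (nhds 0) := by
      apply Filter.Tendsto.congr' _ tendsto_const_nhds
      filter_upwards [hmem] with u hu
      exact (hzero p i h u hu).symm
    exact tendsto_nhds_unique (key p i) h2
  -- the de Boor–Cox recursion on the span
  have hrec : ∀ u : ℝ, bspline t n m i u
      = (u - t i) / (t ((m : ℤ) + i) - t i) * bspline t n (m - 1) i u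
        + (t ((m : ℤ) + i + 1) - u) / (t ((m : ℤ) + i + 1) - t (i + 1))
            * bspline t n (m - 1) (i + 1) u := by
    intro u
    obtain ⟨p, rfl⟩ : ∃ p, m = p + 1 := ⟨m - 1, by omega⟩
    have e1 : ((p : ℤ) + 1 + i) = ((p + 1 : ℕ) : ℤ) + i := by push_cast; ring
    have e2 : ((p : ℤ) + 1 + i + 1) = ((p + 1 : ℕ) : ℤ) + i + 1 := by push_cast; ring
    have e3 : p + 1 - 1 = p := rfl
    simp only [bspline, e3]
    rw [if_pos ⟨by push_cast at hi1 ⊢; omega, by push_cast at hi2; omega⟩, e1]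
  -- take limits on both sides
  have hlim : Filter.Tendsto (bspline t n m i)
      (nhdsWithin (t (j + 1)) (Set.Iio (t (j + 1))))
      (nhds ((t (j + 1) - t i) / (t ((m : ℤ) + i) - t i) * b (m - 1) i (m - 1)
        + (t ((m : ℤ) + i + 1) - t (j + 1)) / (t ((m : ℤ) + i + 1) - t (i + 1))
            * b (m - 1) (i + 1) (m - 1))) := by
    have hT1 : Filter.Tendsto (fun u : ℝ => (u - t i) / (t ((m : ℤ) + i) - t i))
        (nhdsWithin (t (j + 1)) (Set.Iio (t (j + 1))))
        (nhds ((t (j + 1) - t i) / (t ((m : ℤ) + i) - t i))) :=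
      (((continuous_id.sub continuous_const).div_const _).tendsto _).mono_left
        nhdsWithin_le_nhds
    have hT2 : Filter.Tendsto
        (fun u : ℝ => (t ((m : ℤ) + i + 1) - u) / (t ((m : ℤ) + i + 1) - t (i + 1)))
        (nhdsWithin (t (j + 1)) (Set.Iio (t (j + 1))))
        (nhds ((t ((m : ℤ) + i + 1) - t (j + 1)) / (t ((m : ℤ) + i + 1) - t (i + 1)))) :=
      (((continuous_const.sub continuous_id).div_const _).tendsto _).mono_left
        nhdsWithin_le_nhds
    have h4 := (hT1.mul (key (m - 1) i)).add (hT2.mul (key (m - 1) (i + 1)))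
    exact h4.congr (fun u => (hrec u).symm)
  have hmain := tendsto_nhds_unique (key m i) hlim
  rw [hmain]
  have hif2 : ¬ (i + 1 < j - ((m : ℤ) - 1)) := by omega
  rw [if_neg hif2]
  by_cases hc : i < j - ((m : ℤ) - 1)
  · rw [if_pos hc]
    have hz : b (m - 1) i (m - 1) = 0 := by
      apply hbz
      have : ((m - 1 : ℕ) : ℤ) = (m : ℤ) - 1 := by
        rw [Nat.cast_sub hm]; simp
      omega
    rw [hz]
  · rw [if_neg hc]
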